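/- Suppose d ≥ 1, the increments X are i.i.d. with E[‖X‖²] < ∞ and mean zero, and almost surely ‖S_n‖ ≤ n^{1/2+ε} for all but finitely many n (for every ε > 0). Then for a_n = ⌈n^β⌉ with β > 1 and any ε > 0, almost surely for all but finitely many n, max_{a_n ≤ m ≤ a_{n+1}} ‖G_m − G_{a_n}‖ ≤ n^{β/2 − 1 + ε}. -/

import Mathlib

set_option maxHeartbeats 1000000


open MeasureTheory ProbabilityTheory Filter Finset

lemma aux_rpow_diff {β x : ℝ} (hβ : 1 ≤ β) (hx : 1 ≤ x) :
    (x + 1) ^ β - x ^ β ≤ β * (x + 1) ^ (β - 1) := by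
  obtain ⟨c, hc, hceq⟩ := exists_hasDerivAt_eq_slope (fun y => y ^ β)
    (fun y => β * y ^ (β - 1)) (by linarith : x < x + 1)
    (fun y hy => (Real.continuousAt_rpow_const y β (Or.inl (by nlinarith [hy.1]))).continuousWithinAt)
    (fun y hy => Real.hasDerivAt_rpow_const (Or.inr hβ))
  have h1 : (x + 1) ^ β - x ^ β = β * c ^ (β - 1) := by
    rw [hceq]; simp
  rw [h1]
  have hc0 : (0:ℝ) ≤ c := by nlinarith [hc.1]
  have := Real.rpow_le_rpow hc0 hc.2.le (by linarith : (0:ℝ) ≤ β - 1)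
  nlinarith

lemma aux_tele {M : Type*} [AddCommGroup M] (f : ℕ → M) {a m : ℕ} (h : a ≤ m) :
    ∑ k ∈ Finset.Ico a m, (f (k+1) - f k) = f m - f a := by
  rw [Finset.sum_Ico_eq_sub _ h, Finset.sum_range_sub, Finset.sum_range_sub]
  abel

/-- Deviation estimate along the subsequence `a n = ⌈n^β⌉`, `β > 1`: for any `ε > 0`, almost
surely for all but finitely many `n`,
`max_{a n ≤ m ≤ a (n+1)} ‖G m − G (a n)‖ ≤ n^{β/2 − 1 + ε}`. -/
theorem centre_of_mass_subsequence_deviation {Ω : Type*} [MeasureSpace Ω]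
    [IsProbabilityMeasure (ℙ : Measure Ω)] {d : ℕ} (hd : 1 ≤ d)
    (X : ℕ → Ω → EuclideanSpace ℝ (Fin d))
    (hmeas : ∀ i, Measurable (X i))
    (hindep : iIndepFun X ℙ)
    (hident : ∀ i, IdentDistrib (X i) (X 1) ℙ ℙ)
    (hL2 : MemLp (X 1) 2 ℙ)
    (hmean : (∫ ω, X 1 ω ∂ℙ) = 0)
    (S G : ℕ → Ω → EuclideanSpace ℝ (Fin d))
    (hS : ∀ n ω, S n ω = ∑ i ∈ Finset.Icc 1 n, X i ω)
    (hG : ∀ n ω, G n ω = ((n : ℝ))⁻¹ • ∑ i ∈ Finset.Icc 1 n, S i ω)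
    (hgrowth : ∀ ε > (0 : ℝ), ∀ᵐ ω ∂ℙ, ∀ᶠ n : ℕ in atTop,
      ‖S n ω‖ ≤ (n : ℝ) ^ ((1 : ℝ) / 2 + ε))
    (β : ℝ) (hβ : 1 < β)
    (a : ℕ → ℕ) (ha : ∀ n, a n = ⌈(n : ℝ) ^ β⌉₊) :
    ∀ ε > (0 : ℝ), ∀ᵐ ω ∂ℙ, ∀ᶠ n : ℕ in atTop,
      ∀ m : ℕ, a n ≤ m → m ≤ a (n + 1) →
        ‖G m ω - G (a n) ω‖ ≤ (n : ℝ) ^ (β / 2 - 1 + ε) := by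
  intro ε hε
  have hβ0 : (0:ℝ) < β := by linarith
  set ε' : ℝ := min (ε / (2 * β)) (1/4) with hε'def
  have hε'pos : 0 < ε' := lt_min (by positivity) (by norm_num)
  have hε'le : ε' ≤ 1/4 := min_le_right _ _
  have hβε' : β * ε' ≤ ε / 2 := by
    have h1 : ε' ≤ ε / (2 * β) := min_le_left _ _
    calc β * ε' ≤ β * (ε / (2*β)) := by nlinarith
    _ = ε / 2 := by field_simp
  filter_upwards [hgrowth ε' hε'pos] with ω hω
  obtain ⟨N, hN⟩ := eventually_atTop.mp hω
  -- uniform bound on the first N partial sums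
  set C : ℝ := (Finset.range (N+1)).sup' (by simp) (fun i => ‖S i ω‖) with hCdef
  have hrtop : Tendsto (fun k : ℕ => (k:ℝ) ^ ((1:ℝ)/2 + ε')) atTop atTop :=
    (tendsto_rpow_atTop (by positivity)).comp tendsto_natCast_atTop_atTop
  obtain ⟨N₁, hN₁⟩ := eventually_atTop.mp (hrtop.eventually_ge_atTop C)
  set M : ℕ := max (max N N₁) 1 with hMdef
  have hM1 : 1 ≤ M := le_max_right _ _
  -- all partial sums up to k are bounded by k^(1/2+ε')
  have hSbound : ∀ k, M ≤ k → ∀ i, i ≤ k → ‖S i ω‖ ≤ (k:ℝ) ^ ((1:ℝ)/2 + ε') := by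
    intro k hk i hik
    rcases le_or_gt i N with hiN | hiN
    · have h1 : ‖S i ω‖ ≤ C := Finset.le_sup' (fun i => ‖S i ω‖) (Finset.mem_range.mpr (by omega : i < N + 1))
      exact h1.trans (hN₁ k (le_trans (le_trans (le_max_right _ _) (le_max_left _ _)) hk))
    · exact (hN i hiN.le).trans (Real.rpow_le_rpow (by positivity)
        (by exact_mod_cast hik) (by positivity))
  have hGbound : ∀ k, M ≤ k → ‖G k ω‖ ≤ (k:ℝ) ^ ((1:ℝ)/2 + ε') := by
    intro k hk
    have hk1 : 1 ≤ k := le_trans hM1 hk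
    have hk0 : (0:ℝ) < (k:ℝ) := by exact_mod_cast hk1
    rw [hG, norm_smul, Real.norm_eq_abs, abs_of_pos (by positivity)]
    have h1 : ‖∑ i ∈ Finset.Icc 1 k, S i ω‖ ≤ (k:ℝ) * (k:ℝ) ^ ((1:ℝ)/2 + ε') := by
      calc ‖∑ i ∈ Finset.Icc 1 k, S i ω‖ ≤ ∑ i ∈ Finset.Icc 1 k, ‖S i ω‖ :=
            norm_sum_le _ _
        _ ≤ ∑ i ∈ Finset.Icc 1 k, (k:ℝ) ^ ((1:ℝ)/2 + ε') := by
            apply Finset.sum_le_sum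
            intro i hi
            exact hSbound k hk i (Finset.mem_Icc.mp hi).2
        _ = (k:ℝ) * (k:ℝ) ^ ((1:ℝ)/2 + ε') := by
            rw [Finset.sum_const, Nat.card_Icc]
            simp [nsmul_eq_mul]
    calc ((k:ℝ))⁻¹ * ‖∑ i ∈ Finset.Icc 1 k, S i ω‖
        ≤ ((k:ℝ))⁻¹ * ((k:ℝ) * (k:ℝ) ^ ((1:ℝ)/2 + ε')) := by
          apply mul_le_mul_of_nonneg_left h1 (by positivity)
      _ = (k:ℝ) ^ ((1:ℝ)/2 + ε') := by field_simp
  -- one-step bound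
  have hstep : ∀ k, M ≤ k → ‖G (k+1) ω - G k ω‖ ≤ 2 * ((k:ℝ)+1) ^ (ε' - 1/2) := by
    intro k hk
    have hk1 : 1 ≤ k := le_trans hM1 hk
    have hk0 : (0:ℝ) < (k:ℝ) := by exact_mod_cast hk1
    have hid : G (k+1) ω - G k ω = ((k:ℝ)+1)⁻¹ • (S (k+1) ω - G k ω) := by
      have hkne : (k:ℝ) ≠ 0 := ne_of_gt hk0
      have hkne1 : (k:ℝ) + 1 ≠ 0 := by positivity
      simp only [hG, Finset.sum_Icc_succ_top (by omega : 1 ≤ k + 1)]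
      push_cast
      match_scalars <;> field_simp <;> ring
    rw [hid, norm_smul, Real.norm_eq_abs, abs_of_pos (by positivity)]
    have hS1 : ‖S (k+1) ω‖ ≤ ((k:ℝ)+1) ^ ((1:ℝ)/2 + ε') := by
      have := hSbound (k+1) (by omega) (k+1) le_rfl
      push_cast at this ⊢
      exact this
    have hG1 : ‖G k ω‖ ≤ ((k:ℝ)+1) ^ ((1:ℝ)/2 + ε') :=
      (hGbound k hk).trans (Real.rpow_le_rpow (by positivity) (by linarith) (by positivity))
    calc ((k:ℝ)+1)⁻¹ * ‖S (k+1) ω - G k ω‖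
        ≤ ((k:ℝ)+1)⁻¹ * (2 * ((k:ℝ)+1) ^ ((1:ℝ)/2 + ε')) := by
          apply mul_le_mul_of_nonneg_left _ (by positivity)
          calc ‖S (k+1) ω - G k ω‖ ≤ ‖S (k+1) ω‖ + ‖G k ω‖ := norm_sub_le _ _
            _ ≤ 2 * ((k:ℝ)+1) ^ ((1:ℝ)/2 + ε') := by linarith
      _ = 2 * ((k:ℝ)+1) ^ (ε' - 1/2) := by
          rw [← Real.rpow_neg_one ((k:ℝ)+1), mul_comm, mul_assoc,
            ← Real.rpow_add (by positivity)]
          congr 1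
          ring
  -- final combination
  set K : ℝ := 2 * (β * 2 ^ (β - 1) + 1) with hKdef
  have hK0 : 0 < K := by
    have : (0:ℝ) < 2 ^ (β-1) := Real.rpow_pos_of_pos (by norm_num) _
    positivity
  have h3 : ∀ᶠ n : ℕ in atTop, K ≤ (n:ℝ) ^ (ε/2) :=
    ((tendsto_rpow_atTop (by positivity)).comp
      tendsto_natCast_atTop_atTop).eventually_ge_atTop K
  filter_upwards [eventually_ge_atTop (max M 1), h3] with n hn hK
  have hn1 : 1 ≤ n := le_trans (le_max_right _ _) hn
  have hn1' : (1:ℝ) ≤ (n:ℝ) := by exact_mod_cast hn1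
  have hn0 : (0:ℝ) < (n:ℝ) := by linarith
  have hna : (n:ℝ) ≤ (a n : ℝ) := by
    rw [ha]
    calc (n:ℝ) = (n:ℝ) ^ (1:ℝ) := (Real.rpow_one _).symm
      _ ≤ (n:ℝ) ^ β := Real.rpow_le_rpow_of_exponent_le hn1' hβ.le
      _ ≤ (⌈(n:ℝ) ^ β⌉₊ : ℝ) := Nat.le_ceil _
  have hMan : M ≤ a n := le_trans (le_max_left _ _) (le_trans hn (by exact_mod_cast hna))
  have han1 : 1 ≤ a n := le_trans hM1 hMan
  have han0 : (0:ℝ) < (a n : ℝ) := by exact_mod_cast han1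
  have hε'neg : ε' - 1/2 ≤ 0 := by linarith
  intro m hm1 hm2
  -- sum of one-step bounds
  have hsum : ‖G m ω - G (a n) ω‖ ≤ ((m:ℝ) - (a n : ℝ)) * (2 * (a n : ℝ) ^ (ε' - 1/2)) := by
    rw [← aux_tele (fun k => G k ω) hm1]
    calc ‖∑ k ∈ Finset.Ico (a n) m, (G (k+1) ω - G k ω)‖
        ≤ ∑ k ∈ Finset.Ico (a n) m, ‖G (k+1) ω - G k ω‖ := norm_sum_le _ _
      _ ≤ ∑ _k ∈ Finset.Ico (a n) m, 2 * (a n : ℝ) ^ (ε' - 1/2) := by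
          apply Finset.sum_le_sum
          intro k hk
          obtain ⟨hk1, hk2⟩ := Finset.mem_Ico.mp hk
          refine (hstep k (le_trans hMan hk1)).trans ?_
          have : ((k:ℝ)+1) ^ (ε' - 1/2) ≤ (a n : ℝ) ^ (ε' - 1/2) :=
            Real.rpow_le_rpow_of_nonpos han0 (by exact_mod_cast Nat.le_succ_of_le hk1) hε'neg
          linarith
      _ = ((m:ℝ) - (a n : ℝ)) * (2 * (a n : ℝ) ^ (ε' - 1/2)) := by
          rw [Finset.sum_const, Nat.card_Ico, nsmul_eq_mul, Nat.cast_sub hm1]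
  -- numeric bounds
  have hub1 : (m:ℝ) - (a n : ℝ) ≤ ((n:ℝ)+1) ^ β + 1 - (n:ℝ) ^ β := by
    have hma : (m:ℝ) ≤ (a (n+1) : ℝ) := by exact_mod_cast hm2
    have hup : (a (n+1) : ℝ) ≤ ((n:ℝ)+1) ^ β + 1 := by
      rw [ha]
      have := Nat.ceil_lt_add_one (by positivity : (0:ℝ) ≤ ((n+1:ℕ):ℝ) ^ β)
      push_cast at this ⊢
      linarith
    have hlow : (n:ℝ) ^ β ≤ (a n : ℝ) := by rw [ha]; exact Nat.le_ceil _
    linarith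
  have hub2 : (a n : ℝ) ^ (ε' - 1/2) ≤ ((n:ℝ) ^ β) ^ (ε' - 1/2) := by
    have hlow : (n:ℝ) ^ β ≤ (a n : ℝ) := by rw [ha]; exact Nat.le_ceil _
    exact Real.rpow_le_rpow_of_nonpos (by positivity) hlow hε'neg
  have hub3 : ((n:ℝ)+1) ^ β + 1 - (n:ℝ) ^ β ≤ β * 2 ^ (β-1) * (n:ℝ) ^ (β-1) + (n:ℝ) ^ (β-1) := by
    have hdiff : ((n:ℝ)+1) ^ β - (n:ℝ) ^ β ≤ β * ((n:ℝ)+1) ^ (β-1) := aux_rpow_diff hβ.le hn1'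
    have h2n : ((n:ℝ)+1) ^ (β-1) ≤ 2 ^ (β-1) * (n:ℝ) ^ (β-1) := by
      calc ((n:ℝ)+1) ^ (β-1) ≤ (2 * (n:ℝ)) ^ (β-1) :=
            Real.rpow_le_rpow (by linarith) (by linarith) (by linarith)
        _ = 2 ^ (β-1) * (n:ℝ) ^ (β-1) := Real.mul_rpow (by norm_num) hn0.le
    have hone : (1:ℝ) ≤ (n:ℝ) ^ (β-1) := Real.one_le_rpow hn1' (by linarith)
    nlinarith
  have hfin : ((n:ℝ)+1) ^ β + 1 - (n:ℝ) ^ β ≥ 0 := by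
    have : (n:ℝ) ^ β ≤ ((n:ℝ)+1) ^ β := Real.rpow_le_rpow hn0.le (by linarith) hβ0.le
    linarith
  calc ‖G m ω - G (a n) ω‖
      ≤ ((m:ℝ) - (a n : ℝ)) * (2 * (a n : ℝ) ^ (ε' - 1/2)) := hsum
    _ ≤ (((n:ℝ)+1) ^ β + 1 - (n:ℝ) ^ β) * (2 * ((n:ℝ) ^ β) ^ (ε' - 1/2)) := by
        apply mul_le_mul hub1 (by linarith) (by positivity) hfin
    _ ≤ (β * 2 ^ (β-1) * (n:ℝ) ^ (β-1) + (n:ℝ) ^ (β-1)) * (2 * ((n:ℝ) ^ β) ^ (ε' - 1/2)) := by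
        apply mul_le_mul_of_nonneg_right hub3 (by positivity)
    _ = K * ((n:ℝ) ^ (β-1) * ((n:ℝ) ^ β) ^ (ε' - 1/2)) := by rw [hKdef]; ring
    _ = K * (n:ℝ) ^ (β - 1 + β * (ε' - 1/2)) := by
        rw [← Real.rpow_mul hn0.le, ← Real.rpow_add hn0]
    _ ≤ K * (n:ℝ) ^ (β/2 - 1 + ε/2) := by
        apply mul_le_mul_of_nonneg_left _ hK0.le
        apply Real.rpow_le_rpow_of_exponent_le hn1'
        have hexp : β * (ε' - 1/2) = β * ε' - β/2 := by ring
        linarith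
    _ ≤ (n:ℝ) ^ (ε/2) * (n:ℝ) ^ (β/2 - 1 + ε/2) :=
        mul_le_mul_of_nonneg_right hK (Real.rpow_nonneg hn0.le _)
    _ = (n:ℝ) ^ (β/2 - 1 + ε) := by
        rw [← Real.rpow_add hn0]; congr 1; ring
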